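/- Let Φ₁(ξ,η,σ) := ⟨ξ⟩ − ⟨η⟩ + ⟨σ⟩ − ⟨ξ−η+σ⟩. Then for all (ξ,η,σ) ∈ ℝ³ one has the identity ⟨ξ⟩·∂_ξΦ₁(ξ,η,σ) + ⟨η⟩·∂_ηΦ₁(ξ,η,σ) + ⟨σ⟩·∂_σΦ₁(ξ,η,σ) = −((ξ−η+σ)/⟨ξ−η+σ⟩)·Φ₁(ξ,η,σ). -/

import Mathlib

/-- The Japanese bracket `⟨x⟩ = √(1 + x²)`. -/
noncomputable def jb (x : ℝ) : ℝ := Real.sqrt (1 + x ^ 2)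

/-- The phase of the resonant `(+,−,+)` cubic Klein–Gordon interaction:
`Φ₁(ξ,η,σ) = ⟨ξ⟩ − ⟨η⟩ + ⟨σ⟩ − ⟨ξ−η+σ⟩`. -/
noncomputable def Phi₁ (ξ η σ : ℝ) : ℝ := jb ξ - jb η + jb σ - jb (ξ - η + σ)

lemma jb_pos (x : ℝ) : 0 < jb x := Real.sqrt_pos.2 (by positivity)

lemma jb_hasDerivAt (x : ℝ) : HasDerivAt jb (x / jb x) x := by
  have h : HasDerivAt (fun y : ℝ => 1 + y ^ 2) (2 * x) x := by
    simpa using (hasDerivAt_pow 2 x).const_add 1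
  have hne : (1 : ℝ) + x ^ 2 ≠ 0 := by positivity
  have := (Real.hasDerivAt_sqrt hne).comp x h
  refine this.congr_deriv ?_
  have hjb := (jb_pos x).ne'
  unfold jb at *
  field_simp

/-- The vector-field identity for the cubic phase:
`⟨ξ⟩∂_ξΦ₁ + ⟨η⟩∂_ηΦ₁ + ⟨σ⟩∂_σΦ₁ = −((ξ−η+σ)/⟨ξ−η+σ⟩)·Φ₁`. -/
theorem vector_field_identity_cubic (ξ η σ : ℝ) :
    jb ξ * deriv (fun x => Phi₁ x η σ) ξ +
        jb η * deriv (fun y => Phi₁ ξ y σ) η +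
        jb σ * deriv (fun z => Phi₁ ξ η z) σ =
      -((ξ - η + σ) / jb (ξ - η + σ)) * Phi₁ ξ η σ := by
  set s := ξ - η + σ with hs
  have hdξ : deriv (fun x => Phi₁ x η σ) ξ = ξ / jb ξ - s / jb s := by
    have h1 : HasDerivAt (fun x => jb (x - η + σ)) (s / jb s) ξ := by
      have hl : HasDerivAt (fun x : ℝ => x - η + σ) 1 ξ := by
        simpa using ((hasDerivAt_id ξ).sub_const η).add_const σ
      have h := (jb_hasDerivAt s).comp ξ hl
      simp only [mul_one] at h
      exact h
    exact ((((jb_hasDerivAt ξ).sub_const (jb η)).add_const (jb σ)).sub h1).deriv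
  have hdη : deriv (fun y => Phi₁ ξ y σ) η = -(η / jb η) + s / jb s := by
    have h1 : HasDerivAt (fun y => jb (ξ - y + σ)) (-(s / jb s)) η := by
      have hl : HasDerivAt (fun y : ℝ => ξ - y + σ) (-1) η := by
        simpa using ((hasDerivAt_id η).const_sub ξ).add_const σ
      have h := (jb_hasDerivAt s).comp η hl
      simp only [mul_neg, mul_one] at h
      exact h
    have := ((((jb_hasDerivAt η).const_sub (jb ξ)).add_const (jb σ)).sub h1)
    have h2 : HasDerivAt (fun y => Phi₁ ξ y σ) (-(η / jb η) + s / jb s) η := by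
      exact this.congr_deriv (by ring)
    exact h2.deriv
  have hdσ : deriv (fun z => Phi₁ ξ η z) σ = σ / jb σ - s / jb s := by
    have h1 : HasDerivAt (fun z => jb (ξ - η + z)) (s / jb s) σ := by
      have hl : HasDerivAt (fun z : ℝ => ξ - η + z) 1 σ := by
        simpa using (hasDerivAt_id σ).const_add (ξ - η)
      have h := (jb_hasDerivAt s).comp σ hl
      simp only [mul_one] at h
      exact h
    have h2 : HasDerivAt (fun z => Phi₁ ξ η z) (σ / jb σ - s / jb s) σ := by
      have := (((jb_hasDerivAt σ).const_add (jb ξ - jb η)).sub h1)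
      exact this.congr_deriv (by ring)
    exact h2.deriv
  rw [hdξ, hdη, hdσ, Phi₁]
  have h1 := (jb_pos ξ).ne'
  have h2 := (jb_pos η).ne'
  have h3 := (jb_pos σ).ne'
  have h4 := (jb_pos s).ne'
  field_simp
  ring
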